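/- Let X be a finite set of unit vectors in R^n with coherence α := max_{x≠y in X} |⟨x,y⟩| > 0. If x ∈ X is deficient, i.e., the set {y ∈ X : |⟨x,y⟩| = α} does not span R^n, then x is isolable: for every ε > 0 there exists a unit vector x' with ‖x - x'‖ < ε such that |⟨x', y⟩| < α for every y ∈ X \ {x}. -/
import Mathlib
set_option maxHeartbeats 1000000

open scoped RealInnerProductSpace
abbrev E (n : ℕ) := EuclideanSpace ℝ (Fin n)
noncomputable def coh {n : ℕ} (X : Set (E n)) : ℝ :=
  sSup {r : ℝ | ∃ x ∈ X, ∃ y ∈ X, x ≠ y ∧ r = |⟪x, y⟫|}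

theorem deficient_isolable {n : ℕ} (X : Set (E n)) (hfin : X.Finite)
    (hunit : ∀ x ∈ X, ‖x‖ = 1) (α : ℝ) (hα : α = coh X) (hpos : 0 < α)
    (x : E n) (hx : x ∈ X)
    (hdef : Submodule.span ℝ {y | y ∈ X ∧ y ≠ x ∧ |⟪x, y⟫| = α} ≠ ⊤) :
    ∀ ε > 0, ∃ x' : E n, ‖x'‖ = 1 ∧ ‖x - x'‖ < ε ∧
      ∀ y ∈ X, y ≠ x → |⟪x', y⟫| < α := by
  classical
  intro ε hε
  set S : Set (E n) := {y | y ∈ X ∧ y ≠ x ∧ |⟪x, y⟫| = α} with hS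
  -- every distinct pair has inner product ≤ α
  have hcohfin : {r : ℝ | ∃ a ∈ X, ∃ b ∈ X, a ≠ b ∧ r = |⟪a, b⟫|}.Finite := by
    apply Set.Finite.subset ((hfin.prod hfin).image (fun p => |⟪p.1, p.2⟫|))
    rintro r ⟨a, ha, b, hb, hab, rfl⟩
    exact ⟨(a, b), ⟨ha, hb⟩, rfl⟩
  have hle : ∀ y ∈ X, y ≠ x → |⟪x, y⟫| ≤ α := by
    intro y hy hyx
    rw [hα]
    exact le_csSup hcohfin.bddAbove ⟨x, hx, y, hy, (Ne.symm hyx), rfl⟩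
  -- orthogonal unit vector with nonneg inner product with x
  have hbot : (Submodule.span ℝ S)ᗮ ≠ ⊥ := by
    intro h
    exact hdef (Submodule.orthogonal_eq_bot_iff.mp h)
  obtain ⟨z0, hz0mem, hz0ne⟩ := Submodule.exists_mem_ne_zero_of_ne_bot hbot
  have hz0orth : ∀ y ∈ S, ⟪z0, y⟫ = 0 := by
    intro y hySmem
    have := (Submodule.mem_orthogonal _ _).1 hz0mem y (Submodule.subset_span hySmem)
    rwa [real_inner_comm] at this
  set w : E n := ‖z0‖⁻¹ • z0 with hw
  have hz0n : ‖z0‖ ≠ 0 := norm_ne_zero_iff.2 hz0ne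
  have hwnorm : ‖w‖ = 1 := by
    rw [hw, norm_smul, norm_inv, norm_norm, inv_mul_cancel₀ hz0n]
  set z : E n := if 0 ≤ ⟪x, w⟫ then w else -w with hz
  have hznorm : ‖z‖ = 1 := by
    rw [hz]; split <;> simp [hwnorm]
  have hxz : 0 ≤ ⟪x, z⟫ := by
    rw [hz]; split_ifs with h
    · exact h
    · rw [inner_neg_right]; linarith [lt_of_not_ge h]
  have hzorth : ∀ y ∈ S, ⟪z, y⟫ = 0 := by
    intro y hyS
    have h0 := hz0orth y hyS
    rw [hz]
    split_ifs
    · rw [hw, real_inner_smul_left, h0, mul_zero]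
    · rw [inner_neg_left, hw, real_inner_smul_left, h0, mul_zero, neg_zero]
  -- gap for non-neighbors
  set T : Finset (E n) := hfin.toFinset.filter (fun y => y ≠ x ∧ |⟪x, y⟫| ≠ α) with hT
  set F : Finset ℝ := insert (1 : ℝ) (T.image (fun y => (α - |⟪x, y⟫|) / 2)) with hF
  have hFne : F.Nonempty := ⟨1, Finset.mem_insert_self _ _⟩
  set t0 : ℝ := F.min' hFne with ht0
  have ht0pos : 0 < t0 := by
    rw [ht0, Finset.lt_min'_iff]
    intro b hb
    rw [hF, Finset.mem_insert] at hb
    rcases hb with rfl | hb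
    · norm_num
    · obtain ⟨y, hyT, rfl⟩ := Finset.mem_image.1 hb
      rw [hT, Finset.mem_filter, Set.Finite.mem_toFinset] at hyT
      have h1 := hle y hyT.1 hyT.2.1
      have h2 := hyT.2.2
      have : |⟪x, y⟫| < α := lt_of_le_of_ne h1 h2
      linarith
  have ht0le : ∀ y ∈ T, t0 ≤ (α - |⟪x, y⟫|) / 2 := by
    intro y hyT
    exact Finset.min'_le _ _ (Finset.mem_insert_of_mem (Finset.mem_image_of_mem _ hyT))
  set t : ℝ := min t0 (ε / 3) with htdef
  have htpos : 0 < t := lt_min ht0pos (by linarith)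
  have hteps : t ≤ ε / 3 := min_le_right _ _
  have htt0 : t ≤ t0 := min_le_left _ _
  set v : E n := x + t • z with hv
  have hxnorm : ‖x‖ = 1 := hunit x hx
  have hvsq : ‖v‖ ^ 2 = 1 + 2 * (t * ⟪x, z⟫) + t ^ 2 := by
    rw [hv, norm_add_sq_real, real_inner_smul_right, norm_smul, hxnorm, hznorm]
    rw [Real.norm_eq_abs, mul_pow, sq_abs]
    ring
  have hv1 : 1 < ‖v‖ := by
    have h1 : 1 < ‖v‖ ^ 2 := by nlinarith
    nlinarith [norm_nonneg v]
  have hvpos : (0 : ℝ) < ‖v‖ := by linarith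
  have hvle : ‖v‖ ≤ 1 + t := by
    calc ‖v‖ ≤ ‖x‖ + ‖t • z‖ := norm_add_le _ _
    _ = 1 + t := by rw [hxnorm, norm_smul, hznorm, Real.norm_eq_abs, abs_of_pos htpos, mul_one]
  refine ⟨‖v‖⁻¹ • v, ?_, ?_, ?_⟩
  · rw [norm_smul, norm_inv, norm_norm, inv_mul_cancel₀ (ne_of_gt hvpos)]
  · have h1 : ‖x - v‖ = t := by
      rw [hv]
      simp [norm_smul, hznorm, abs_of_pos htpos]
    have h2 : ‖v - ‖v‖⁻¹ • v‖ = ‖v‖ - 1 := by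
      have : v - ‖v‖⁻¹ • v = (1 - ‖v‖⁻¹) • v := by
        rw [sub_smul, one_smul]
      rw [this, norm_smul, Real.norm_eq_abs]
      rw [abs_of_nonneg (by
        have : ‖v‖⁻¹ < 1 := by
          rw [inv_lt_one_iff₀]; right; exact hv1
        linarith)]
      have hvne : ‖v‖ ≠ 0 := ne_of_gt hvpos
      field_simp
    calc ‖x - ‖v‖⁻¹ • v‖ ≤ ‖x - v‖ + ‖v - ‖v‖⁻¹ • v‖ := by
          have := norm_sub_le_norm_sub_add_norm_sub x v (‖v‖⁻¹ • v)
          exact this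
    _ = t + (‖v‖ - 1) := by rw [h1, h2]
    _ ≤ t + t := by linarith
    _ < ε := by linarith
  · intro y hy hyx
    have hinner : ⟪‖v‖⁻¹ • v, y⟫ = ‖v‖⁻¹ * (⟪x, y⟫ + t * ⟪z, y⟫) := by
      rw [real_inner_smul_left, hv, inner_add_left, real_inner_smul_left]
    by_cases hyS : y ∈ S
    · have hz0 := hzorth y hyS
      have hax : |⟪x, y⟫| = α := hyS.2.2
      rw [hinner, hz0, mul_zero, add_zero, abs_mul, abs_of_pos (inv_pos.2 hvpos), hax]
      have : ‖v‖⁻¹ < 1 := by rw [inv_lt_one_iff₀]; right; exact hv1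
      nlinarith
    · have hne : |⟪x, y⟫| ≠ α := by
        intro hc; exact hyS ⟨hy, hyx, hc⟩
      have hyT : y ∈ T := by
        rw [hT, Finset.mem_filter, Set.Finite.mem_toFinset]
        exact ⟨hy, hyx, hne⟩
      have hgap : t ≤ (α - |⟪x, y⟫|) / 2 := le_trans htt0 (ht0le y hyT)
      have hlt : |⟪x, y⟫| < α := lt_of_le_of_ne (hle y hy hyx) hne
      have hzy : |⟪z, y⟫| ≤ 1 := by
        have := abs_real_inner_le_norm z y
        rwa [hznorm, hunit y hy, one_mul] at this
      have hinvle : ‖v‖⁻¹ ≤ 1 := by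
        rw [inv_le_one_iff₀]; right; linarith
      rw [hinner, abs_mul, abs_of_pos (inv_pos.2 hvpos)]
      have hb : |⟪x, y⟫ + t * ⟪z, y⟫| ≤ |⟪x, y⟫| + t := by
        calc |⟪x, y⟫ + t * ⟪z, y⟫| ≤ |⟪x, y⟫| + |t * ⟪z, y⟫| := abs_add_le _ _
        _ = |⟪x, y⟫| + t * |⟪z, y⟫| := by rw [abs_mul, abs_of_pos htpos]
        _ ≤ |⟪x, y⟫| + t := by nlinarith
      calc ‖v‖⁻¹ * |⟪x, y⟫ + t * ⟪z, y⟫| ≤ 1 * (|⟪x, y⟫| + t) := by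
            apply mul_le_mul hinvle hb (abs_nonneg _) (by norm_num)
      _ = |⟪x, y⟫| + t := one_mul _
      _ < α := by linarith
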